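/- Let p be an odd prime. Then det[D_p] = (-1)^m · (∏_{k=1}^{m} (1 - ζ_p^(k²))) · det[C_p]. -/
import Mathlib
set_option maxRecDepth 4000


/-- For an odd prime `p` with `m = (p-1)/2`,
`det Dₚ = (-1)^m · (∏_{k=1}^{m} (1 - ζ^(k²))) · det Cₚ`. -/
theorem stmt11 (p : ℕ) [hp : Fact p.Prime] (hodd : Odd p)
    (m : ℕ) (hm : m = (p - 1) / 2)
    (ζ : ℂ) (hζ : ζ = Complex.exp (2 * Real.pi * Complex.I / p))
    (D : Matrix (Fin (m + 1)) (Fin (m + 1)) ℂ)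
    (hD : D = Matrix.of fun (j k : Fin (m + 1)) => ζ ^ ((j : ℕ) ^ 2 * (k : ℕ) ^ 2))
    (C : Matrix (Fin m) (Fin m) ℂ)
    (hC : C = Matrix.of fun (j k : Fin m) =>
      (1 - ζ ^ (((j : ℕ) + 1) ^ 2 * ((k : ℕ) + 1) ^ 2)) / (1 - ζ ^ (((j : ℕ) + 1) ^ 2))) :
    D.det = (-1) ^ m * (∏ k ∈ Finset.Icc 1 m, (1 - ζ ^ (k ^ 2))) * C.det := by
  have hp2 : 2 ≤ p := hp.out.two_le
  have hζp : IsPrimitiveRoot ζ p := by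
    rw [hζ]; exact Complex.isPrimitiveRoot_exp p (by omega)
  have hmp : m < p := by omega
  -- key nonvanishing fact
  have hne : ∀ k : ℕ, 1 ≤ k → k ≤ m → (1 : ℂ) - ζ ^ (k ^ 2) ≠ 0 := by
    intro k hk1 hk2 h
    have h1 : ζ ^ (k ^ 2) = 1 := by
      have := sub_eq_zero.mp h
      exact this.symm
    have hdvd : p ∣ k ^ 2 := (hζp.pow_eq_one_iff_dvd _).mp h1
    have hdk : p ∣ k := hp.out.dvd_of_dvd_pow hdvd
    have := Nat.le_of_dvd (by omega) hdk
    omega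
  -- Step 1: subtract row 0 from the other rows
  set B : Matrix (Fin (m + 1)) (Fin (m + 1)) ℂ :=
    Matrix.of (fun i j : Fin (m + 1) =>
      if i = 0 then 1 else ζ ^ ((i : ℕ) ^ 2 * (j : ℕ) ^ 2) - 1) with hB
  have hdetDB : D.det = B.det := by
    apply Matrix.det_eq_of_forall_row_eq_smul_add_const
      (fun i : Fin (m + 1) => if i = 0 then 0 else 1) 0 (by simp)
    intro i j
    by_cases hi : i = 0
    · subst hi; simp [hD, hB]
    · simp [hD, hB, hi]
  -- Step 2: expand along column 0
  have hcol0 : ∀ i : Fin (m + 1), i ≠ 0 → B i 0 = 0 := by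
    intro i hi
    simp [hB, hi]
  have hdetB : B.det = (B.submatrix (Fin.succAbove 0) Fin.succ).det := by
    rw [Matrix.det_succ_column_zero]
    rw [Finset.sum_eq_single 0]
    · simp [hB]
    · intro i _ hi
      rw [hcol0 i hi]; ring
    · simp
  -- Step 3: the submatrix equals columnwise scaling of C
  have hsub : B.submatrix (Fin.succAbove 0) Fin.succ =
      Matrix.of (fun i j : Fin m => (-(1 - ζ ^ (((i : ℕ) + 1) ^ 2))) * C i j) := by
    ext i j
    have hi0 : ((Fin.succAbove 0 i : Fin (m + 1)) : ℕ) = (i : ℕ) + 1 := by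
      simp [Fin.succAbove]
    have hsne : (Fin.succAbove 0 i : Fin (m + 1)) ≠ 0 := Fin.succAbove_ne 0 i
    simp only [Matrix.submatrix_apply, hB, Matrix.of_apply, if_neg hsne, hi0, Fin.val_succ,
      hC]
    have hd := hne ((i : ℕ) + 1) (by omega) (by omega)
    field_simp
    ring
  have hdetsub : (B.submatrix (Fin.succAbove 0) Fin.succ).det =
      (∏ i : Fin m, (-(1 - ζ ^ (((i : ℕ) + 1) ^ 2)))) * C.det := by
    rw [hsub]
    exact Matrix.det_mul_column _ _
  -- Step 4: rewrite the product
  have hprod : (∏ i : Fin m, (-(1 - ζ ^ (((i : ℕ) + 1) ^ 2)))) =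
      (-1) ^ m * ∏ k ∈ Finset.Icc 1 m, (1 - ζ ^ (k ^ 2)) := by
    have h1 : (∏ i : Fin m, (-(1 - ζ ^ (((i : ℕ) + 1) ^ 2)))) =
        ∏ i : Fin m, (-1 : ℂ) * (1 - ζ ^ (((i : ℕ) + 1) ^ 2)) := by
      apply Finset.prod_congr rfl; intro i _; ring
    rw [h1, Finset.prod_mul_distrib, Finset.prod_const, Finset.card_univ, Fintype.card_fin]
    congr 1
    rw [Fin.prod_univ_eq_prod_range (fun i => 1 - ζ ^ ((i + 1) ^ 2))]
    rw [show Finset.Icc 1 m = Finset.Ico 1 (m + 1) by rfl]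
    rw [Finset.prod_Ico_eq_prod_range]
    simp [add_comm]
  rw [hdetDB, hdetB, hdetsub, hprod, mul_assoc]
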